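/- (Linear convergence under repeated perfect prediction.) Suppose α_i < 1 for at least one i and β_i < 1 for every i, and let x_PS be the limit of the perfect-prediction dynamics. Then for every c with max_i β_i < c < 1 there exists a constant C > 0 such that ‖x^{(T)} − x_PS‖₂ ≤ C c^T for all T ≥ 0; that is, the dynamics converge to x_PS at a linear rate governed by max_i β_i. -/

import Mathlib

open Matrix Filter Topology

/-- Row-normalized adjacency matrix `W = deg⁻¹ A` of a simple graph. -/
noncomputable def rowNormAdj {n : ℕ} (G : SimpleGraph (Fin n)) [DecidableRel G.Adj] :
    Matrix (Fin n) (Fin n) ℝ :=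
  Matrix.of fun i j => (G.adjMatrix ℝ) i j / (G.degree i : ℝ)

/-- The multi-step influence matrix
`Ψ_K = Σ_{k=0}^{K−1} (Λ_α W)^k (I − Λ_α) + (Λ_α W)^K`. -/
noncomputable def Psi {n : ℕ} (K : ℕ) (α : Fin n → ℝ) (W : Matrix (Fin n) (Fin n) ℝ) :
    Matrix (Fin n) (Fin n) ℝ :=
  (∑ k ∈ Finset.range K, (Matrix.diagonal α * W) ^ k * (1 - Matrix.diagonal α))
    + (Matrix.diagonal α * W) ^ K

section aux

variable {n : ℕ}

lemma rowNormAdj_nonneg (G : SimpleGraph (Fin n)) [DecidableRel G.Adj] (i j : Fin n) :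
    0 ≤ rowNormAdj G i j := by
  unfold rowNormAdj
  simp only [Matrix.of_apply]
  apply div_nonneg _ (Nat.cast_nonneg _)
  simp only [SimpleGraph.adjMatrix_apply]
  split_ifs <;> norm_num

lemma rowNormAdj_row_sum (G : SimpleGraph (Fin n)) [DecidableRel G.Adj] (i : Fin n)
    (hd : 0 < G.degree i) : ∑ j, rowNormAdj G i j = 1 := by
  unfold rowNormAdj
  simp only [Matrix.of_apply]
  rw [← Finset.sum_div]
  rw [div_eq_one_iff_eq (by exact_mod_cast hd.ne')]
  have h := SimpleGraph.adjMatrix_mulVec_const_apply (G := G) (α := ℝ) (a := 1) (v := i)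
  simpa [Matrix.mulVec, dotProduct, Function.const] using h

lemma psi_nonneg (K : ℕ) (α : Fin n → ℝ) (hα : ∀ i, α i ∈ Set.Icc (0 : ℝ) 1)
    (W : Matrix (Fin n) (Fin n) ℝ) (hW : ∀ i j, 0 ≤ W i j) (i j : Fin n) :
    0 ≤ Psi K α W i j := by
  have hM : ∀ i j, 0 ≤ (Matrix.diagonal α * W) i j := by
    intro i j
    rw [Matrix.mul_apply]
    refine Finset.sum_nonneg fun k _ => ?_
    rcases eq_or_ne i k with rfl | h
    · simpa using mul_nonneg (hα i).1 (hW i j)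
    · simp [Matrix.diagonal_apply_ne _ h]
  have hMk : ∀ k i j, 0 ≤ ((Matrix.diagonal α * W) ^ k) i j := by
    intro k
    induction k with
    | zero =>
      intro i j
      rcases eq_or_ne i j with rfl | h
      · simp
      · simp [Matrix.one_apply_ne h]
    | succ k ih =>
      intro i j
      rw [pow_succ, Matrix.mul_apply]
      exact Finset.sum_nonneg fun l _ => mul_nonneg (ih i l) (hM l j)
  unfold Psi
  simp only [Matrix.add_apply, Matrix.sum_apply]
  refine add_nonneg (Finset.sum_nonneg fun k _ => ?_) (hMk K i j)
  rw [Matrix.mul_apply]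
  refine Finset.sum_nonneg fun l _ => mul_nonneg (hMk k i l) ?_
  rcases eq_or_ne l j with rfl | h
  · simp [Matrix.one_apply, (hα l).2]
  · simp [Matrix.one_apply_ne h, Matrix.diagonal_apply_ne _ h]

lemma sum_mulVec' {s : Finset ℕ} (A : ℕ → Matrix (Fin n) (Fin n) ℝ) (v : Fin n → ℝ) :
    (∑ k ∈ s, A k) *ᵥ v = ∑ k ∈ s, A k *ᵥ v := by
  funext i
  simp only [Matrix.mulVec, dotProduct, Matrix.sum_apply, Finset.sum_apply,
    Finset.sum_mul]
  rw [Finset.sum_comm]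

lemma psi_row_sum (K : ℕ) (α : Fin n → ℝ) (W : Matrix (Fin n) (Fin n) ℝ)
    (hW : ∀ i, ∑ j, W i j = 1) :
    Psi K α W *ᵥ (fun _ => (1 : ℝ)) = fun _ => 1 := by
  have hW1 : W *ᵥ (fun _ => (1 : ℝ)) = fun _ => 1 := by
    funext i; simp [Matrix.mulVec, dotProduct, hW i]
  set M := Matrix.diagonal α * W with hMdef
  have hM1 : M *ᵥ (fun _ => (1 : ℝ)) = α := by
    rw [hMdef, ← Matrix.mulVec_mulVec, hW1]
    funext i; simp [Matrix.mulVec_diagonal]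
  have hterm : ∀ k, (M ^ k * (1 - Matrix.diagonal α)) *ᵥ (fun _ => (1 : ℝ))
      = M ^ k *ᵥ (fun _ => (1:ℝ)) - M ^ (k + 1) *ᵥ (fun _ => (1:ℝ)) := by
    have hDα1 : Matrix.diagonal α *ᵥ (fun _ => (1:ℝ)) = α := by
      funext i; simp [Matrix.mulVec_diagonal]
    intro k
    rw [pow_succ, ← Matrix.mulVec_mulVec, ← Matrix.mulVec_mulVec, Matrix.sub_mulVec,
      Matrix.one_mulVec, Matrix.mulVec_sub, hDα1, hM1]
  unfold Psi
  rw [Matrix.add_mulVec, sum_mulVec']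
  rw [show (∑ k ∈ Finset.range K, (M ^ k * (1 - Matrix.diagonal α)) *ᵥ fun _ => (1:ℝ))
      = ∑ k ∈ Finset.range K, (M ^ k *ᵥ (fun _ => (1:ℝ)) - M ^ (k+1) *ᵥ (fun _ => (1:ℝ)))
    from Finset.sum_congr rfl fun k _ => hterm k]
  rw [Finset.sum_range_sub' (fun k => M ^ k *ᵥ (fun _ => (1:ℝ)))]
  rw [← hMdef]
  simp

/-- A nonnegative row-stochastic matrix is an ∞-norm contraction. -/
lemma stoch_contraction (P : Matrix (Fin n) (Fin n) ℝ) (hP : ∀ i j, 0 ≤ P i j)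
    (hrow : ∀ i, ∑ j, P i j = 1) (w : Fin n → ℝ) : ‖P *ᵥ w‖ ≤ ‖w‖ := by
  rw [pi_norm_le_iff_of_nonneg (norm_nonneg w)]
  intro i
  calc ‖(P *ᵥ w) i‖ = |∑ j, P i j * w j| := by simp [Matrix.mulVec, dotProduct]
    _ ≤ ∑ j, |P i j * w j| := Finset.abs_sum_le_sum_abs _ _
    _ ≤ ∑ j, P i j * ‖w‖ := by
        refine Finset.sum_le_sum fun j _ => ?_
        rw [abs_mul, abs_of_nonneg (hP i j)]
        exact mul_le_mul_of_nonneg_left (norm_le_pi_norm w j) (hP i j)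
    _ = ‖w‖ := by rw [← Finset.sum_mul, hrow i, one_mul]

end aux

/-- linear convergence under repeated perfect prediction.  If
`β_i < 1` for every `i` and `x_PS` is the limit of the dynamics, then for any
`max_i β_i < c < 1` there is `C > 0` with `‖x^{(T)} − x_PS‖₂ ≤ C c^T`. -/
theorem linear_convergence_perfect_prediction {n : ℕ} (hn : 2 ≤ n)
    (G : SimpleGraph (Fin n)) [DecidableRel G.Adj] (hG : G.Connected)
    (K : ℕ) (hK : 1 ≤ K)
    (α β : Fin n → ℝ) (hα : ∀ i, α i ∈ Set.Icc (0 : ℝ) 1)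
    (hβ : ∀ i, β i ∈ Set.Icc (0 : ℝ) 1)
    (hα1 : ∃ i, α i < 1) (hβ1 : ∀ i, β i < 1)
    (xstar : Fin n → ℝ) (hx : ∀ i, xstar i ∈ Set.Icc (0 : ℝ) 1)
    (x : ℕ → Fin n → ℝ) (hx0 : x 0 = xstar)
    (hrec : ∀ t, x (t + 1) = (Psi K α (rowNormAdj G)) *ᵥ
      ((1 - Matrix.diagonal β) *ᵥ xstar + (Matrix.diagonal β) *ᵥ x t))
    (xPS : Fin n → ℝ) (hlim : Tendsto x atTop (𝓝 xPS)) :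
    ∀ c : ℝ, (⨆ i, β i) < c → c < 1 →
      ∃ C : ℝ, 0 < C ∧ ∀ T : ℕ,
        Real.sqrt (∑ i, (x T i - xPS i) ^ 2) ≤ C * c ^ T := by
  intro c hc hc1
  have hne : Nonempty (Fin n) := ⟨⟨0, by omega⟩⟩
  set b : ℝ := ⨆ i, β i with hbdef
  have hbub : ∀ i, β i ≤ b := fun i => le_ciSup (Set.Finite.bddAbove (Set.finite_range β)) i
  have hb0 : 0 ≤ b := le_trans (hβ hne.some).1 (hbub hne.some)
  have hcpos : 0 < c := lt_of_le_of_lt hb0 hc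
  -- degrees positive
  have hdeg : ∀ i, 0 < G.degree i := by
    intro i
    rw [G.degree_pos_iff_exists_adj]
    have : Nontrivial (Fin n) := Fin.nontrivial_iff_two_le.mpr hn
    obtain ⟨j, hj⟩ := exists_ne i
    obtain ⟨p⟩ := hG.preconnected i j
    obtain ⟨u, h, -⟩ := SimpleGraph.Walk.not_nil_iff.mp
      (SimpleGraph.Walk.not_nil_of_ne (p := p) (Ne.symm hj))
    exact ⟨u, h⟩
  set P := Psi K α (rowNormAdj G) with hPdef
  have hPnn : ∀ i j, 0 ≤ P i j := psi_nonneg K α hα _ (rowNormAdj_nonneg G)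
  have hProw : ∀ i, ∑ j, P i j = 1 := by
    intro i
    have := congrFun (psi_row_sum K α (rowNormAdj G)
      (fun i => rowNormAdj_row_sum G i (hdeg i))) i
    simpa [Matrix.mulVec, dotProduct] using this
  -- fixed point equation
  have hfix : xPS = P *ᵥ ((1 - Matrix.diagonal β) *ᵥ xstar + (Matrix.diagonal β) *ᵥ xPS) := by
    have hcont : Continuous fun v : Fin n → ℝ =>
        P *ᵥ ((1 - Matrix.diagonal β) *ᵥ xstar + (Matrix.diagonal β) *ᵥ v) := by
      apply Continuous.matrix_mulVec continuous_const
      exact Continuous.add continuous_const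
        (Continuous.matrix_mulVec continuous_const continuous_id)
    have h1 : Tendsto (fun t => x (t + 1)) atTop (𝓝 xPS) :=
      hlim.comp (tendsto_add_atTop_nat 1)
    have h2 : Tendsto (fun t => x (t + 1)) atTop
        (𝓝 (P *ᵥ ((1 - Matrix.diagonal β) *ᵥ xstar + (Matrix.diagonal β) *ᵥ xPS))) := by
      simp only [hrec]
      exact (hcont.tendsto xPS).comp hlim
    exact tendsto_nhds_unique h1 h2
  -- error recurrence
  have herr : ∀ t, x (t + 1) - xPS = P *ᵥ (Matrix.diagonal β *ᵥ (x t - xPS)) := by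
    intro t
    calc x (t + 1) - xPS
        = P *ᵥ ((1 - Matrix.diagonal β) *ᵥ xstar + Matrix.diagonal β *ᵥ x t)
          - P *ᵥ ((1 - Matrix.diagonal β) *ᵥ xstar + Matrix.diagonal β *ᵥ xPS) := by
          rw [hrec t, ← hfix]
      _ = P *ᵥ (Matrix.diagonal β *ᵥ x t - Matrix.diagonal β *ᵥ xPS) := by
          rw [← Matrix.mulVec_sub]; congr 1; abel
      _ = P *ᵥ (Matrix.diagonal β *ᵥ (x t - xPS)) := by
          conv_rhs => rw [Matrix.mulVec_sub]
  -- contraction bound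
  have hstep : ∀ t, ‖x (t + 1) - xPS‖ ≤ b * ‖x t - xPS‖ := by
    intro t
    rw [herr t]
    calc ‖P *ᵥ (Matrix.diagonal β *ᵥ (x t - xPS))‖
        ≤ ‖Matrix.diagonal β *ᵥ (x t - xPS)‖ := stoch_contraction P hPnn hProw _
      _ ≤ b * ‖x t - xPS‖ := by
          rw [pi_norm_le_iff_of_nonneg (mul_nonneg hb0 (norm_nonneg _))]
          intro i
          rw [Matrix.mulVec_diagonal]
          calc ‖β i * (x t - xPS) i‖ = |β i| * ‖(x t - xPS) i‖ := by
                rw [norm_mul]; rfl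
            _ ≤ b * ‖x t - xPS‖ := by
                refine mul_le_mul ?_ (norm_le_pi_norm _ i) (norm_nonneg _) hb0
                rw [abs_of_nonneg (hβ i).1]; exact hbub i
  have hiter : ∀ T, ‖x T - xPS‖ ≤ b ^ T * ‖x 0 - xPS‖ := by
    intro T
    induction T with
    | zero => simp
    | succ T ih =>
      calc ‖x (T + 1) - xPS‖ ≤ b * ‖x T - xPS‖ := hstep T
        _ ≤ b * (b ^ T * ‖x 0 - xPS‖) := by
            exact mul_le_mul_of_nonneg_left ih hb0
        _ = b ^ (T + 1) * ‖x 0 - xPS‖ := by ring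
  refine ⟨Real.sqrt n * ‖x 0 - xPS‖ + 1, by positivity, fun T => ?_⟩
  have h2norm : Real.sqrt (∑ i, (x T i - xPS i) ^ 2) ≤ Real.sqrt n * ‖x T - xPS‖ := by
    rw [show Real.sqrt n * ‖x T - xPS‖ = Real.sqrt (n * ‖x T - xPS‖ ^ 2) by
      rw [Real.sqrt_mul (Nat.cast_nonneg n), Real.sqrt_sq (norm_nonneg _)]]
    apply Real.sqrt_le_sqrt
    calc ∑ i, (x T i - xPS i) ^ 2 ≤ ∑ _i : Fin n, ‖x T - xPS‖ ^ 2 := by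
          refine Finset.sum_le_sum fun i _ => ?_
          rw [← sq_abs]
          refine pow_le_pow_left₀ (abs_nonneg _) ?_ 2
          exact norm_le_pi_norm (x T - xPS) i
      _ = n * ‖x T - xPS‖ ^ 2 := by simp [Finset.sum_const, mul_comm]
  calc Real.sqrt (∑ i, (x T i - xPS i) ^ 2) ≤ Real.sqrt n * ‖x T - xPS‖ := h2norm
    _ ≤ Real.sqrt n * (b ^ T * ‖x 0 - xPS‖) :=
        mul_le_mul_of_nonneg_left (hiter T) (Real.sqrt_nonneg n)
    _ ≤ Real.sqrt n * (c ^ T * ‖x 0 - xPS‖) := by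
        refine mul_le_mul_of_nonneg_left (mul_le_mul_of_nonneg_right
          (pow_le_pow_left₀ hb0 hc.le T) (norm_nonneg _)) (Real.sqrt_nonneg n)
    _ = (Real.sqrt n * ‖x 0 - xPS‖) * c ^ T := by ring
    _ ≤ (Real.sqrt n * ‖x 0 - xPS‖ + 1) * c ^ T := by
        refine mul_le_mul_of_nonneg_right (by linarith) (pow_nonneg hcpos.le T)
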